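/- Every extraordinary number n > 500 is even. -/

import Mathlib

/-- Sum of the positive divisors of `n`. -/
def sigma1 (n : ℕ) : ℕ := ∑ d ∈ n.divisors, d

/-- `G n = σ(n) / (n · log log n)`. -/
noncomputable def G (n : ℕ) : ℝ := (sigma1 n : ℝ) / ((n : ℝ) * Real.log (Real.log n))

/-- `n` is a GA1 number: composite and `G n ≥ G (n/p)` for every prime `p ∣ n`. -/
def GA1 (n : ℕ) : Prop :=
  1 < n ∧ ¬ n.Prime ∧ ∀ p : ℕ, p.Prime → p ∣ n → G (n / p) ≤ G n

/-- `n` is a GA2 number: `n > 1` and `G n ≥ G (c·n)` for all positive integers `c`. -/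
def GA2 (n : ℕ) : Prop :=
  1 < n ∧ ∀ c : ℕ, 0 < c → G (c * n) ≤ G n

/-- `n` is extraordinary: both GA1 and GA2. -/
def Extraordinary (n : ℕ) : Prop := GA1 n ∧ GA2 n

/-- Every extraordinary number `n > 500` is even. -/
theorem extraordinary_even (n : ℕ) (hn : 500 < n) (hext : Extraordinary n) : Even n := by
  by_contra hodd
  rw [Nat.not_even_iff_odd] at hodd
  have hcop : Nat.Coprime 2 n := hodd.coprime_two_left
  have hσmul : sigma1 (2 * n) = 3 * sigma1 n := by
    have := hcop.sum_divisors_mul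
    simpa [sigma1, Nat.prime_two.sum_divisors] using this
  have hσpos : 0 < sigma1 n := by
    refine Finset.sum_pos (fun d hd => Nat.pos_of_mem_divisors hd) ?_
    exact Nat.nonempty_divisors.mpr (by omega)
  have hG := hext.2.2 2 (by norm_num)
  -- numeric facts
  have hnpos : (0:ℝ) < n := by positivity
  have hn500 : (500:ℝ) < n := by exact_mod_cast hn
  set L : ℝ := Real.log n with hL
  have hL4 : (4:ℝ) < L := by
    rw [hL, Real.lt_log_iff_exp_lt hnpos]
    have h1 : Real.exp 4 = Real.exp 1 ^ (4:ℕ) := by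
      rw [← Real.exp_nat_mul]; norm_num
    have h2 : Real.exp 1 ^ (4:ℕ) < 2.7182818286 ^ (4:ℕ) :=
      pow_lt_pow_left₀ Real.exp_one_lt_d9 (Real.exp_pos 1).le (by norm_num)
    nlinarith [h1, h2]
  have hlog2 : Real.log 2 < 1 := by
    have := Real.log_two_lt_d9; linarith
  have hlog2pos : (0:ℝ) < Real.log 2 := Real.log_pos (by norm_num)
  have hL2 : Real.log ((2 * n : ℕ) : ℝ) = Real.log 2 + L := by
    push_cast
    rw [Real.log_mul (by norm_num) (ne_of_gt hnpos)]
  set M : ℝ := Real.log 2 + L with hM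
  have hApos : (0:ℝ) < Real.log L := Real.log_pos (by linarith)
  have hBpos : (0:ℝ) < Real.log M := Real.log_pos (by linarith)
  -- unfold G in hG
  have hGn : G n = (sigma1 n : ℝ) / ((n : ℝ) * Real.log L) := rfl
  have hG2n : G (2 * n) = (3 * (sigma1 n : ℝ)) / ((2 * (n : ℝ)) * Real.log M) := by
    rw [G, hσmul, hL2]
    push_cast
    ring_nf
  rw [hGn, hG2n] at hG
  have hσR : (0:ℝ) < (sigma1 n : ℝ) := by exact_mod_cast hσpos
  have key : 3 * Real.log L ≤ 2 * Real.log M := by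
    rw [div_le_div_iff₀ (by positivity) (by positivity)] at hG
    have h2 : ((sigma1 n : ℝ) * n) * (3 * Real.log L) ≤ ((sigma1 n : ℝ) * n) * (2 * Real.log M) := by
      nlinarith [hG]
    exact le_of_mul_le_mul_left h2 (by positivity)
  -- From key: L^3 ≤ M^2
  have hLM : L ^ 3 ≤ M ^ 2 := by
    have h1 : Real.log (L ^ 3) ≤ Real.log (M ^ 2) := by
      rw [Real.log_pow, Real.log_pow]; push_cast; linarith
    have := (Real.log_le_log_iff (by positivity) (by positivity)).mp h1
    exact this
  -- But M < (5/4) L so M^2 < 2 L^2 < L^3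
  have hMlt : M < (5/4) * L := by rw [hM]; nlinarith
  nlinarith [hLM, hMlt, hL4, sq_nonneg L]
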